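/- Let 1 ≤ p < ∞, let P : X → Y be a continuous m-homogeneous polynomial between Banach spaces and let P̌ : X × ⋯ × X → Y be the unique continuous symmetric m-linear map satisfying P̌(x, …, x) = P(x) for all x ∈ X. Then P is a factorable strongly p-summing polynomial if and only if P̌ is a factorable strongly p-summing m-linear operator. -/

import Mathlib

open scoped BigOperators
open MeasureTheory

noncomputable section

section Defs

variable (𝕜 : Type*) [RCLike 𝕜]

section Multi

variable {n : ℕ} {X : Fin n → Type*} {Y : Type*}
  [∀ k, NormedAddCommGroup (X k)] [∀ k, NormedSpace 𝕜 (X k)]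
  [NormedAddCommGroup Y] [NormedSpace 𝕜 Y]

/-- `C` witnesses the defining inequality of factorable strongly `p`-summing
multilinear operators. -/
def FactStronglySummingBound (p : ℝ) (T : ContinuousMultilinearMap 𝕜 X Y) (C : ℝ) : Prop :=
  0 ≤ C ∧ ∀ (m₁ m₂ : ℕ) (x : Fin m₁ → Fin m₂ → (∀ k, X k)) (lam : Fin m₁ → Fin m₂ → 𝕜),
    (∑ j, ‖∑ i, lam j i • T (x j i)‖ ^ p) ^ (1 / p) ≤
      C * ⨆ φ : {φ : ContinuousMultilinearMap 𝕜 X 𝕜 // ‖φ‖ ≤ 1},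
        (∑ j, ‖∑ i, lam j i • φ.1 (x j i)‖ ^ p) ^ (1 / p)

/-- Factorable strongly `p`-summing continuous multilinear operators. -/
def FactStronglySumming (p : ℝ) (T : ContinuousMultilinearMap 𝕜 X Y) : Prop :=
  ∃ C, FactStronglySummingBound 𝕜 p T C

/-- The factorable strongly `p`-summing norm `‖T‖_{FSt,p}` (the least admissible constant). -/
def fstMultiNorm (p : ℝ) (T : ContinuousMultilinearMap 𝕜 X Y) : ℝ :=
  sInf {C | FactStronglySummingBound 𝕜 p T C}

/-- Strongly `p`-summing continuous multilinear operators (Dimant). -/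
def StronglySumming (p : ℝ) (T : ContinuousMultilinearMap 𝕜 X Y) : Prop :=
  ∃ C : ℝ, 0 ≤ C ∧ ∀ (m : ℕ) (x : Fin m → (∀ k, X k)),
    (∑ j, ‖T (x j)‖ ^ p) ^ (1 / p) ≤
      C * ⨆ φ : {φ : ContinuousMultilinearMap 𝕜 X 𝕜 // ‖φ‖ ≤ 1},
        (∑ j, ‖φ.1 (x j)‖ ^ p) ^ (1 / p)

/-- Factorable `p`-dominated continuous multilinear operators. -/
def FactorablePDominated (p : ℝ) (T : ContinuousMultilinearMap 𝕜 X Y) : Prop :=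
  ∃ C : ℝ, 0 ≤ C ∧ ∀ (m₁ m₂ : ℕ) (x : Fin m₁ → Fin m₂ → (∀ k, X k))
    (lam : Fin m₁ → Fin m₂ → 𝕜),
    (∑ j, ‖∑ i, lam j i • T (x j i)‖ ^ p) ^ (1 / p) ≤
      C * ⨆ φ : ∀ k, {f : X k →L[𝕜] 𝕜 // ‖f‖ ≤ 1},
        (∑ j, ‖∑ i, lam j i • ∏ k, (φ k).1 (x j i k)‖ ^ p) ^ (1 / p)

/-- `p`-semi-integral continuous multilinear operators. -/
def PSemiIntegral (p : ℝ) (T : ContinuousMultilinearMap 𝕜 X Y) : Prop :=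
  ∃ C : ℝ, 0 ≤ C ∧ ∀ (m : ℕ) (x : Fin m → (∀ k, X k)),
    (∑ j, ‖T (x j)‖ ^ p) ^ (1 / p) ≤
      C * ⨆ φ : ∀ k, {f : X k →L[𝕜] 𝕜 // ‖f‖ ≤ 1},
        (∑ j, ‖∏ k, (φ k).1 (x j k)‖ ^ p) ^ (1 / p)

end Multi

section Poly

variable {X Y : Type*} [NormedAddCommGroup X] [NormedSpace 𝕜 X]
  [NormedAddCommGroup Y] [NormedSpace 𝕜 Y]

/-- `P` is a continuous `m`-homogeneous polynomial: the diagonal of a continuous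
`m`-linear map. -/
def IsHomogPoly (m : ℕ) (P : X → Y) : Prop :=
  ∃ T : ContinuousMultilinearMap 𝕜 (fun _ : Fin m => X) Y, ∀ x, P x = T (fun _ => x)

/-- Sup norm of a (homogeneous polynomial) map on the closed unit ball. -/
def polyNorm (P : X → Y) : ℝ :=
  ⨆ x : {x : X // ‖x‖ ≤ 1}, ‖P x.1‖

/-- `C` witnesses the defining inequality of factorable strongly `p`-summing
`m`-homogeneous polynomials. -/
def FactStronglySummingPolyBound (m : ℕ) (p : ℝ) (P : X → Y) (C : ℝ) : Prop :=
  0 ≤ C ∧ ∀ (m₁ m₂ : ℕ) (x : Fin m₁ → Fin m₂ → X) (lam : Fin m₁ → Fin m₂ → 𝕜),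
    (∑ j, ‖∑ i, lam j i • P (x j i)‖ ^ p) ^ (1 / p) ≤
      C * ⨆ q : {q : X → 𝕜 // IsHomogPoly 𝕜 m q ∧ polyNorm q ≤ 1},
        (∑ j, ‖∑ i, lam j i • q.1 (x j i)‖ ^ p) ^ (1 / p)

/-- Factorable strongly `p`-summing `m`-homogeneous polynomials. -/
def FactStronglySummingPoly (m : ℕ) (p : ℝ) (P : X → Y) : Prop :=
  IsHomogPoly 𝕜 m P ∧ ∃ C, FactStronglySummingPolyBound 𝕜 m p P C

/-- The factorable strongly `p`-summing norm `‖P‖_{FSt,p}` of a polynomial. -/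
def fstPolyNorm (m : ℕ) (p : ℝ) (P : X → Y) : ℝ :=
  sInf {C | FactStronglySummingPolyBound 𝕜 m p P C}

/-- `C` witnesses the defining inequality of absolutely `p`-summing linear operators. -/
def AbsSummingBound (p : ℝ) (u : X →L[𝕜] Y) (C : ℝ) : Prop :=
  0 ≤ C ∧ ∀ (m : ℕ) (x : Fin m → X),
    (∑ j, ‖u (x j)‖ ^ p) ^ (1 / p) ≤
      C * ⨆ φ : {φ : X →L[𝕜] 𝕜 // ‖φ‖ ≤ 1}, (∑ j, ‖φ.1 (x j)‖ ^ p) ^ (1 / p)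

/-- Absolutely `p`-summing continuous linear operators. -/
def AbsolutelySumming (p : ℝ) (u : X →L[𝕜] Y) : Prop :=
  ∃ C, AbsSummingBound 𝕜 p u C

/-- The absolutely `p`-summing norm `π_p(u)` (the least admissible constant). -/
def piSummingNorm (p : ℝ) (u : X →L[𝕜] Y) : ℝ :=
  sInf {C | AbsSummingBound 𝕜 p u C}

end Poly

end Defs

end

open scoped BigOperators
open Finset

noncomputable def sgn (𝕜 : Type*) [RCLike 𝕜] (b : Bool) : 𝕜 := if b then 1 else -1

lemma sgn_norm (𝕜 : Type*) [RCLike 𝕜] (b : Bool) : ‖sgn 𝕜 b‖ = 1 := by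
  cases b <;> simp [sgn]

lemma sum_sgn_pow (𝕜 : Type*) [RCLike 𝕜] (e : ℕ) :
    ∑ b : Bool, sgn 𝕜 b ^ (1 + e) = if Even e then 0 else 2 := by
  have : ((-1 : 𝕜)) ^ (1 + e) = -(-1 : 𝕜) ^ e := by
    rw [pow_add, pow_one]; ring
  rcases Nat.even_or_odd e with he | he
  · simp [sgn, Fintype.sum_bool, this, he.neg_one_pow, he]
  · simp [sgn, Fintype.sum_bool, this, he.neg_one_pow, Nat.not_even_iff_odd.mpr he]

lemma fiber_card_sum {m : ℕ} (f : Fin m → Fin m) :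
    ∑ j : Fin m, #{k : Fin m | f k = j} = m := by
  classical
  have := Finset.card_eq_sum_card_fiberwise (f := f) (s := Finset.univ) (t := Finset.univ)
    (fun x _ => mem_univ _)
  simpa using this.symm

lemma all_odd_iff_bijective {m : ℕ} (f : Fin m → Fin m) :
    (∀ j, Odd #{k : Fin m | f k = j}) ↔ Function.Bijective f := by
  classical
  constructor
  · intro h
    rw [← Finite.injective_iff_bijective]
    have h1 : ∀ j, 1 ≤ #{k : Fin m | f k = j} := fun j => (h j).pos
    have hsum := fiber_card_sum f
    have heq : ∀ j ∈ Finset.univ, #{k : Fin m | f k = j} = 1 := by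
      by_contra hco
      push_neg at hco
      obtain ⟨j, _, hj⟩ := hco
      have h2 : 2 ≤ #{k : Fin m | f k = j} := lt_of_le_of_ne (h1 j) (Ne.symm hj)
      have : m + 1 ≤ ∑ j : Fin m, #{k : Fin m | f k = j} := by
        calc m + 1 = (∑ _j : Fin m, 1) + 1 := by simp
        _ ≤ ∑ j : Fin m, #{k : Fin m | f k = j} := by
          rw [← Finset.sum_erase_add _ _ (mem_univ j), ← Finset.sum_erase_add _ _ (mem_univ j)]
          have e1 : ∑ _x ∈ univ.erase j, 1 ≤ ∑ x ∈ univ.erase j, #{k : Fin m | f k = x} :=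
            Finset.sum_le_sum (fun i _ => h1 i)
          omega
      omega
    intro a b hab
    have := heq (f a) (mem_univ _)
    rw [Finset.card_eq_one] at this
    obtain ⟨c, hc⟩ := this
    have ha : a ∈ ({k : Fin m | f k = f a} : Finset _) := by simp
    have hb : b ∈ ({k : Fin m | f k = f a} : Finset _) := by simp [hab]
    rw [hc] at ha hb
    simp at ha hb; rw [ha, hb]
  · intro hf j
    let e := Equiv.ofBijective f hf
    have : ({k : Fin m | f k = j} : Finset _) = {e.symm j} := by
      ext k
      simp only [Finset.mem_filter, Finset.mem_univ, true_and, Finset.mem_singleton]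
      constructor
      · intro hk
        have : e k = j := hk
        rw [← this, Equiv.symm_apply_apply]
      · rintro rfl
        exact e.apply_symm_apply j
    rw [this]; simp

lemma sum_sgn_prod {𝕜 : Type*} [RCLike 𝕜] {m : ℕ} (f : Fin m → Fin m) :
    ∑ ε : Fin m → Bool, ((∏ k, sgn 𝕜 (ε k)) * ∏ k, sgn 𝕜 (ε (f k)))
      = if Function.Bijective f then (2:𝕜)^m else 0 := by
  classical
  have key : ∀ ε : Fin m → Bool,
      (∏ k, sgn 𝕜 (ε k)) * ∏ k, sgn 𝕜 (ε (f k))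
        = ∏ j, sgn 𝕜 (ε j) ^ (1 + #{k : Fin m | f k = j}) := by
    intro ε
    have h1 : ∏ k, sgn 𝕜 (ε (f k)) = ∏ j, sgn 𝕜 (ε j) ^ #{k : Fin m | f k = j} := by
      rw [Finset.prod_comp (fun j => sgn 𝕜 (ε j)) f]
      apply Finset.prod_subset (Finset.subset_univ _)
      intro j _ hj
      have : #{k : Fin m | f k = j} = 0 := by
        rw [Finset.card_eq_zero]
        ext k; simp only [Finset.mem_filter, Finset.mem_univ, true_and,
          Finset.notMem_empty, iff_false]
        intro hk; exact hj (hk ▸ Finset.mem_image_of_mem f (mem_univ k))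
      simp [this]
    rw [h1, ← Finset.prod_mul_distrib]
    congr 1; ext j; rw [pow_add, pow_one]
  simp_rw [key]
  have := Finset.prod_univ_sum (ι := Fin m) (fun _ => (Finset.univ : Finset Bool))
    (fun j b => sgn 𝕜 b ^ (1 + #{k : Fin m | f k = j}))
  rw [Fintype.piFinset_univ] at this
  rw [← this]
  simp_rw [sum_sgn_pow]
  by_cases hf : Function.Bijective f
  · rw [if_pos hf]
    have hodd := (all_odd_iff_bijective f).mpr hf
    calc ∏ j : Fin m, (if Even #{k : Fin m | f k = j} then (0:𝕜) else 2)
        = ∏ _j : Fin m, (2:𝕜) := by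
          apply Finset.prod_congr rfl; intro j _
          rw [if_neg (Nat.not_even_iff_odd.mpr (hodd j))]
      _ = 2 ^ m := by simp
  · rw [if_neg hf]
    have : ∃ j, Even #{k : Fin m | f k = j} := by
      by_contra h; push_neg at h
      exact hf ((all_odd_iff_bijective f).mp (fun j => Nat.not_even_iff_odd.mp (h j)))
    obtain ⟨j, hj⟩ := this
    exact Finset.prod_eq_zero (mem_univ j) (if_pos hj)

section Polar

variable {𝕜 : Type*} [RCLike 𝕜] {X Y : Type*}
  [NormedAddCommGroup X] [NormedSpace 𝕜 X] [NormedAddCommGroup Y] [NormedSpace 𝕜 Y]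

/-- Polarization: the signed sum over sign patterns recovers the symmetrization. -/
lemma polar_eq {m : ℕ} (S : ContinuousMultilinearMap 𝕜 (fun _ : Fin m => X) Y)
    (x : Fin m → X) :
    ∑ ε : Fin m → Bool, (∏ k, sgn 𝕜 (ε k)) • S (fun _ => ∑ i, sgn 𝕜 (ε i) • x i)
      = (2:𝕜)^m • ∑ σ : Equiv.Perm (Fin m), S (x ∘ σ) := by
  classical
  have expand : ∀ ε : Fin m → Bool,
      S (fun _ : Fin m => ∑ i, sgn 𝕜 (ε i) • x i)
        = ∑ f : Fin m → Fin m, (∏ k, sgn 𝕜 (ε (f k))) • S (x ∘ f) := by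
    intro ε
    rw [S.map_sum (fun _ i => sgn 𝕜 (ε i) • x i)]
    apply Finset.sum_congr rfl
    intro f _
    exact S.map_smul_univ (fun k => sgn 𝕜 (ε (f k))) (fun k => x (f k))
  simp_rw [expand, Finset.smul_sum, smul_smul]
  rw [Finset.sum_comm]
  have : ∀ f : Fin m → Fin m,
      ∑ ε : Fin m → Bool, ((∏ k, sgn 𝕜 (ε k)) * ∏ k, sgn 𝕜 (ε (f k))) • S (x ∘ f)
        = (if Function.Bijective f then (2:𝕜)^m else 0) • S (x ∘ f) := by
    intro f
    rw [← Finset.sum_smul, sum_sgn_prod]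
  simp_rw [this, ite_smul, zero_smul]
  rw [← Finset.sum_filter]
  refine (Finset.sum_nbij' (i := fun (σ : Equiv.Perm (Fin m)) => ⇑σ)
    (j := fun f => if h : Function.Bijective f then Equiv.ofBijective f h else Equiv.refl _)
    ?_ ?_ ?_ ?_ ?_).symm
  · intro σ _; exact Finset.mem_filter.mpr ⟨Finset.mem_univ _, σ.bijective⟩
  · intro f _; exact Finset.mem_univ _
  · intro σ _
    rw [dif_pos σ.bijective]
    exact Equiv.ext fun _ => rfl
  · intro f hf
    rw [dif_pos (Finset.mem_filter.mp hf).2]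
    rfl
  · intro σ _; rfl

end Polar

section Aux

variable {𝕜 : Type*} [RCLike 𝕜] {X Y : Type*}
  [NormedAddCommGroup X] [NormedSpace 𝕜 X] [NormedAddCommGroup Y] [NormedSpace 𝕜 Y]

lemma polar_eq_sym {m : ℕ} (T : ContinuousMultilinearMap 𝕜 (fun _ : Fin m => X) Y)
    (hsym : ∀ (x : Fin m → X) (σ : Equiv.Perm (Fin m)), T (x ∘ σ) = T x) (x : Fin m → X) :
    ∑ ε : Fin m → Bool, (∏ k, sgn 𝕜 (ε k)) • T (fun _ => ∑ i, sgn 𝕜 (ε i) • x i)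
      = ((2:𝕜)^m * (m.factorial : 𝕜)) • T x := by
  rw [polar_eq]
  have : ∑ σ : Equiv.Perm (Fin m), T (x ∘ σ) = (m.factorial : ℕ) • T x := by
    rw [Finset.sum_congr rfl (fun σ _ => hsym x σ), Finset.sum_const, Finset.card_univ,
      Fintype.card_perm, Fintype.card_fin]
  rw [this, ← Nat.cast_smul_eq_nsmul 𝕜, smul_smul]

lemma bddAbove_of_le {ι : Sort*} (g : ι → ℝ) {B : ℝ} (h : ∀ i, g i ≤ B) :
    BddAbove (Set.range g) := ⟨B, by rintro y ⟨i, rfl⟩; exact h i⟩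

lemma lp_mono {n : ℕ} {p : ℝ} (hp : 1 ≤ p) {a b : Fin n → ℝ} (ha : ∀ j, 0 ≤ a j)
    (h : ∀ j, a j ≤ b j) : (∑ j, a j ^ p) ^ (1/p) ≤ (∑ j, b j ^ p) ^ (1/p) := by
  have hp0 : (0:ℝ) < p := lt_of_lt_of_le one_pos hp
  apply Real.rpow_le_rpow
  · exact Finset.sum_nonneg fun j _ => Real.rpow_nonneg (ha j) p
  · exact Finset.sum_le_sum fun j _ => Real.rpow_le_rpow (ha j) (h j) hp0.le
  · positivity

lemma lp_smul {n : ℕ} {p : ℝ} (hp : 1 ≤ p) {c : ℝ} (hc : 0 ≤ c) (a : Fin n → ℝ)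
    (ha : ∀ j, 0 ≤ a j) : (∑ j, (c * a j) ^ p) ^ (1/p) = c * (∑ j, a j ^ p) ^ (1/p) := by
  have hp0 : p ≠ 0 := by positivity
  have h1 : ∀ j : Fin n, (c * a j) ^ p = c ^ p * a j ^ p := fun j => Real.mul_rpow hc (ha j)
  simp_rw [h1]
  rw [← Finset.mul_sum, Real.mul_rpow (Real.rpow_nonneg hc p)
    (Finset.sum_nonneg fun j _ => Real.rpow_nonneg (ha j) p),
    ← Real.rpow_mul hc]
  rw [mul_one_div_cancel hp0, Real.rpow_one]

lemma homog_le {m : ℕ} {q : X → 𝕜} (hq : IsHomogPoly 𝕜 m q) (hn : polyNorm q ≤ 1) (x : X) :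
    ‖q x‖ ≤ ‖x‖ ^ m := by
  obtain ⟨S, hS⟩ := hq
  have hball : ∀ y : X, ‖y‖ ≤ 1 → ‖q y‖ ≤ 1 := by
    intro y hy
    refine le_trans ?_ hn
    have hbdd : BddAbove (Set.range fun z : {x : X // ‖x‖ ≤ 1} => ‖q z.1‖) := by
      apply bddAbove_of_le _ (B := ‖S‖)
      intro z
      rw [hS]
      refine (S.le_opNorm _).trans ?_
      have h1 : ∏ _i : Fin m, ‖z.1‖ ≤ 1 :=
        Finset.prod_le_one (fun _ _ => norm_nonneg _) (fun _ _ => z.2)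
      calc ‖S‖ * ∏ _i : Fin m, ‖z.1‖ ≤ ‖S‖ * 1 :=
            mul_le_mul_of_nonneg_left h1 (norm_nonneg _)
        _ = ‖S‖ := mul_one _
    exact le_ciSup hbdd ⟨y, hy⟩
  by_cases hx : x = 0
  · subst hx
    rcases Nat.eq_zero_or_pos m with hm | hm
    · subst hm; simpa using hball 0 (by simp)
    · have h0 : q 0 = 0 := by
        rw [hS]
        exact S.map_coord_zero ⟨0, hm⟩ rfl
      rw [h0, norm_zero]
      positivity
  · set c : 𝕜 := (‖x‖ : 𝕜) with hcdef
    have hc : ‖c‖ = ‖x‖ := by simp [hcdef]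
    have hx0 : ‖x‖ ≠ 0 := norm_ne_zero_iff.mpr hx
    have hc0 : c ≠ 0 := by
      simpa [hcdef] using hx0
    set u : X := c⁻¹ • x with hudef
    have hu : ‖u‖ ≤ 1 := by
      rw [hudef, norm_smul, norm_inv, hc, inv_mul_cancel₀ hx0]
    have hxu : x = c • u := (smul_inv_smul₀ hc0 x).symm
    have key : q x = c ^ m * q u := by
      rw [hxu, hS, hS]
      have := S.map_smul_univ (fun _ => c) (fun _ => u)
      simpa [Finset.prod_const, smul_eq_mul] using this
    rw [key, norm_mul, norm_pow, hc]
    calc ‖x‖ ^ m * ‖q u‖ ≤ ‖x‖ ^ m * 1 :=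
          mul_le_mul_of_nonneg_left (hball u hu) (by positivity)
      _ = ‖x‖ ^ m := mul_one _

lemma q_bdd (m m₁ m₂ : ℕ) {p : ℝ} (hp : 1 ≤ p) (x : Fin m₁ → Fin m₂ → X)
    (lam : Fin m₁ → Fin m₂ → 𝕜) :
    BddAbove (Set.range fun q : {q : X → 𝕜 // IsHomogPoly 𝕜 m q ∧ polyNorm q ≤ 1} =>
      (∑ j, ‖∑ i, lam j i • q.1 (x j i)‖ ^ p) ^ (1/p)) := by
  apply bddAbove_of_le _ (B := (∑ j, (∑ i, ‖lam j i‖ * ‖x j i‖ ^ m) ^ p) ^ (1/p))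
  intro q
  apply lp_mono hp (fun j => norm_nonneg _)
  intro j
  refine (norm_sum_le _ _).trans (Finset.sum_le_sum ?_)
  intro i _
  rw [norm_smul]
  exact mul_le_mul_of_nonneg_left (homog_le q.2.1 q.2.2 _) (norm_nonneg _)

lemma phi_bdd (m m₁ m₂ : ℕ) {p : ℝ} (hp : 1 ≤ p) (x : Fin m₁ → Fin m₂ → (Fin m → X))
    (lam : Fin m₁ → Fin m₂ → 𝕜) :
    BddAbove (Set.range
      fun φ : {φ : ContinuousMultilinearMap 𝕜 (fun _ : Fin m => X) 𝕜 // ‖φ‖ ≤ 1} =>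
      (∑ j, ‖∑ i, lam j i • φ.1 (x j i)‖ ^ p) ^ (1/p)) := by
  apply bddAbove_of_le _ (B := (∑ j, (∑ i, ‖lam j i‖ * ∏ k, ‖x j i k‖) ^ p) ^ (1/p))
  intro φ
  apply lp_mono hp (fun j => norm_nonneg _)
  intro j
  refine (norm_sum_le _ _).trans (Finset.sum_le_sum ?_)
  intro i _
  rw [norm_smul]
  refine mul_le_mul_of_nonneg_left ((φ.1.le_opNorm _).trans ?_) (norm_nonneg _)
  calc ‖φ.1‖ * ∏ k, ‖x j i k‖ ≤ 1 * ∏ k, ‖x j i k‖ :=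
        mul_le_mul_of_nonneg_right φ.2 (by positivity)
    _ = _ := one_mul _

lemma sym_norm_le {m : ℕ} (S : ContinuousMultilinearMap 𝕜 (fun _ : Fin m => X) 𝕜)
    (hq : ∀ z : X, ‖S (fun _ => z)‖ ≤ ‖z‖ ^ m) (y : Fin m → X) :
    ‖∑ σ : Equiv.Perm (Fin m), S.domDomCongr σ y‖ ≤ (m:ℝ)^m * ∏ k, ‖y k‖ := by
  classical
  have unit : ∀ u : Fin m → X, (∀ k, ‖u k‖ ≤ 1) →
      ‖∑ σ : Equiv.Perm (Fin m), S.domDomCongr σ u‖ ≤ (m:ℝ)^m := by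
    intro u hu
    have hpol := polar_eq S u
    have hA : ∑ σ : Equiv.Perm (Fin m), S (u ∘ σ)
        = ∑ σ : Equiv.Perm (Fin m), S.domDomCongr σ u :=
      Finset.sum_congr rfl fun σ _ => rfl
    rw [hA] at hpol
    have h2 : (0:ℝ) < 2 ^ m := by positivity
    rw [← mul_le_mul_iff_of_pos_left h2]
    have hnorm2 : ‖((2:𝕜)^m)‖ = (2:ℝ)^m := by
      rw [norm_pow]; norm_num
    calc (2:ℝ)^m * ‖∑ σ : Equiv.Perm (Fin m), S.domDomCongr σ u‖
        = ‖(2:𝕜)^m • ∑ σ : Equiv.Perm (Fin m), S.domDomCongr σ u‖ := by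
          rw [norm_smul, hnorm2]
      _ = ‖∑ ε : Fin m → Bool, (∏ k, sgn 𝕜 (ε k)) • S (fun _ => ∑ i, sgn 𝕜 (ε i) • u i)‖ := by
          rw [hpol]
      _ ≤ ∑ ε : Fin m → Bool, ‖(∏ k, sgn 𝕜 (ε k)) • S (fun _ => ∑ i, sgn 𝕜 (ε i) • u i)‖ :=
          norm_sum_le _ _
      _ ≤ ∑ _ε : Fin m → Bool, (m:ℝ)^m := by
          apply Finset.sum_le_sum
          intro ε _
          rw [norm_smul]
          have h1 : ‖∏ k, sgn 𝕜 (ε k)‖ = 1 := by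
            rw [norm_prod]
            simp [sgn_norm]
          rw [h1, one_mul]
          refine (hq _).trans ?_
          have hz : ‖∑ i, sgn 𝕜 (ε i) • u i‖ ≤ (m:ℝ) := by
            refine (norm_sum_le _ _).trans ?_
            calc ∑ i, ‖sgn 𝕜 (ε i) • u i‖ ≤ ∑ _i : Fin m, (1:ℝ) := by
                  apply Finset.sum_le_sum
                  intro i _
                  rw [norm_smul, sgn_norm, one_mul]
                  exact hu i
              _ = (m:ℝ) := by simp
          exact pow_le_pow_left₀ (norm_nonneg _) hz m
      _ = (2:ℝ)^m * (m:ℝ)^m := by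
          rw [Finset.sum_const, Finset.card_univ]
          have hcard : Fintype.card (Fin m → Bool) = 2 ^ m := by
            simp [Fintype.card_fun]
          rw [hcard, nsmul_eq_mul]
          push_cast
          ring
  by_cases hy : ∃ k, y k = 0
  · obtain ⟨k, hk⟩ := hy
    have hzero : ∀ σ : Equiv.Perm (Fin m), S.domDomCongr σ y = 0 := fun σ =>
      (S.domDomCongr σ).map_coord_zero k hk
    simp only [hzero, Finset.sum_const, smul_zero, norm_zero]
    positivity
  · push_neg at hy
    set c : Fin m → 𝕜 := fun k => (‖y k‖ : 𝕜) with hcdef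
    have hc0 : ∀ k, c k ≠ 0 := fun k => by
      simpa [hcdef] using norm_ne_zero_iff.mpr (hy k)
    set u : Fin m → X := fun k => (c k)⁻¹ • y k with hudef
    have hyu : y = fun k => c k • u k := by
      funext k; rw [hudef]; exact (smul_inv_smul₀ (hc0 k) (y k)).symm
    have hu1 : ∀ k, ‖u k‖ ≤ 1 := by
      intro k
      rw [hudef]
      simp only [norm_smul, norm_inv, hcdef]
      rw [RCLike.norm_ofReal, abs_of_nonneg (norm_nonneg _),
        inv_mul_cancel₀ (norm_ne_zero_iff.mpr (hy k))]
    have hexp : ∑ σ : Equiv.Perm (Fin m), S.domDomCongr σ y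
        = (∏ k, c k) • ∑ σ : Equiv.Perm (Fin m), S.domDomCongr σ u := by
      rw [Finset.smul_sum]
      apply Finset.sum_congr rfl
      intro σ _
      rw [hyu]
      exact (S.domDomCongr σ).map_smul_univ c u
    rw [hexp, norm_smul]
    have hnc : ‖∏ k, c k‖ = ∏ k, ‖y k‖ := by
      rw [norm_prod]
      apply Finset.prod_congr rfl
      intro k _
      rw [hcdef, RCLike.norm_ofReal, abs_of_nonneg (norm_nonneg _)]
    rw [hnc]
    calc (∏ k, ‖y k‖) * ‖∑ σ : Equiv.Perm (Fin m), S.domDomCongr σ u‖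
        ≤ (∏ k, ‖y k‖) * (m:ℝ)^m :=
          mul_le_mul_of_nonneg_left (unit u hu1)
            (Finset.prod_nonneg fun _ _ => norm_nonneg _)
      _ = (m:ℝ)^m * ∏ k, ‖y k‖ := mul_comm _ _

end Aux

/-- an `m`-homogeneous polynomial `P` (the diagonal of the symmetric
continuous `m`-linear map `T = P̌`) is factorable strongly `p`-summing iff `T` is a
factorable strongly `p`-summing multilinear operator. -/
theorem factStronglySummingPoly_iff_symmetric_multilinear
    {𝕜 : Type*} [RCLike 𝕜] {X Y : Type*}
    [NormedAddCommGroup X] [NormedSpace 𝕜 X] [CompleteSpace X]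
    [NormedAddCommGroup Y] [NormedSpace 𝕜 Y] [CompleteSpace Y]
    (m : ℕ) (p : ℝ) (hp : 1 ≤ p)
    (T : ContinuousMultilinearMap 𝕜 (fun _ : Fin m => X) Y)
    (hsym : ∀ (x : Fin m → X) (σ : Equiv.Perm (Fin m)), T (x ∘ σ) = T x) :
    FactStronglySummingPoly 𝕜 m p (fun x => T fun _ => x) ↔ FactStronglySumming 𝕜 p T := by
  haveI hXne : Nonempty {x : X // ‖x‖ ≤ 1} := ⟨⟨0, by simp⟩⟩
  haveI hφne : Nonempty {φ : ContinuousMultilinearMap 𝕜 (fun _ : Fin m => X) 𝕜 // ‖φ‖ ≤ 1} :=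
    ⟨⟨0, by simp⟩⟩
  haveI hqne : Nonempty {q : X → 𝕜 // IsHomogPoly 𝕜 m q ∧ polyNorm q ≤ 1} := by
    refine ⟨⟨fun _ => 0, ⟨0, fun x => by simp⟩, ?_⟩⟩
    have : polyNorm (fun _ : X => (0:𝕜)) = 0 := by
      rw [polyNorm]
      simp only [norm_zero]
      exact ciSup_const
    rw [this]; exact zero_le_one
  constructor
  · -- hard direction
    rintro ⟨-, C, hC0, hC⟩
    have h2m : ((2:𝕜)^m * (m.factorial:𝕜)) ≠ 0 :=
      mul_ne_zero (pow_ne_zero _ two_ne_zero) (Nat.cast_ne_zero.mpr m.factorial_ne_zero)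
    have hmmnat : (0:ℕ) < m^m := by
      rcases Nat.eq_zero_or_pos m with h | h
      · subst h; norm_num
      · positivity
    have hmm : (0:ℝ) < (m:ℝ)^m := by
      have := hmmnat
      exact_mod_cast Nat.cast_pos.mpr this |>.trans_le (by push_cast; exact le_refl _)
    set r : 𝕜 := ((2:𝕜)^m * (m.factorial:𝕜))⁻¹ with hrdef
    refine ⟨C * ((m:ℝ)^m / m.factorial), mul_nonneg hC0 (by positivity), ?_⟩
    intro m₁ m₂ x lam
    set e := Fintype.equivFin (Fin m₂ × (Fin m → Bool)) with hedef
    set M := Fintype.card (Fin m₂ × (Fin m → Bool)) with hM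
    set x' : Fin m₁ → Fin M → X :=
      fun j i' => ∑ k, sgn 𝕜 ((e.symm i').2 k) • x j (e.symm i').1 k with hx'
    set lam' : Fin m₁ → Fin M → 𝕜 :=
      fun j i' => r * lam j (e.symm i').1 * ∏ k, sgn 𝕜 ((e.symm i').2 k) with hlam'
    have hr1 : r * ((2:𝕜)^m * (m.factorial:𝕜)) = 1 := inv_mul_cancel₀ h2m
    have hne2 : ((2:𝕜)^m) ≠ 0 := pow_ne_zero _ two_ne_zero
    have hnefact : ((m.factorial:𝕜)) ≠ 0 := Nat.cast_ne_zero.mpr m.factorial_ne_zero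
    have hkey : ∀ j, ∑ i', lam' j i' • T (fun _ => x' j i') = ∑ i, lam j i • T (x j i) := by
      intro j
      calc ∑ i', lam' j i' • T (fun _ => x' j i')
          = ∑ z : Fin m₂ × (Fin m → Bool), (r * lam j z.1 * ∏ k, sgn 𝕜 (z.2 k)) •
              T (fun _ => ∑ k, sgn 𝕜 (z.2 k) • x j z.1 k) :=
            Equiv.sum_comp e.symm (fun z : Fin m₂ × (Fin m → Bool) =>
              (r * lam j z.1 * ∏ k, sgn 𝕜 (z.2 k)) •
                T (fun _ => ∑ k, sgn 𝕜 (z.2 k) • x j z.1 k))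
        _ = ∑ i : Fin m₂, ∑ ε : Fin m → Bool, (r * lam j i * ∏ k, sgn 𝕜 (ε k)) •
              T (fun _ => ∑ k, sgn 𝕜 (ε k) • x j i k) := Fintype.sum_prod_type _
        _ = ∑ i, lam j i • T (x j i) := by
            apply Finset.sum_congr rfl
            intro i _
            calc ∑ ε : Fin m → Bool, (r * lam j i * ∏ k, sgn 𝕜 (ε k)) •
                  T (fun _ => ∑ k, sgn 𝕜 (ε k) • x j i k)
                = (r * lam j i) • ∑ ε : Fin m → Bool, (∏ k, sgn 𝕜 (ε k)) •
                    T (fun _ => ∑ k, sgn 𝕜 (ε k) • x j i k) := by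
                  rw [Finset.smul_sum]
                  exact Finset.sum_congr rfl fun ε _ => by rw [smul_smul, mul_assoc]
              _ = (r * lam j i) • (((2:𝕜)^m * (m.factorial:𝕜)) • T (x j i)) := by
                  rw [polar_eq_sym T hsym]
              _ = lam j i • T (x j i) := by
                  rw [smul_smul, show (r * lam j i) * ((2:𝕜)^m * (m.factorial:𝕜))
                    = lam j i * (r * ((2:𝕜)^m * (m.factorial:𝕜))) by ring, hr1, mul_one]
    have happ := hC m₁ M x' lam'
    have hsup : (⨆ q : {q : X → 𝕜 // IsHomogPoly 𝕜 m q ∧ polyNorm q ≤ 1},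
        (∑ j, ‖∑ i', lam' j i' • q.1 (x' j i')‖ ^ p) ^ (1/p)) ≤
        ((m:ℝ)^m / m.factorial) *
          ⨆ φ : {φ : ContinuousMultilinearMap 𝕜 (fun _ : Fin m => X) 𝕜 // ‖φ‖ ≤ 1},
            (∑ j, ‖∑ i, lam j i • φ.1 (x j i)‖ ^ p) ^ (1/p) := by
      apply ciSup_le
      rintro ⟨q, ⟨S, hS⟩, hq1⟩
      have hdiag : ∀ z : X, ‖S (fun _ => z)‖ ≤ ‖z‖ ^ m := by
        intro z
        have h := homog_le (⟨S, hS⟩ : IsHomogPoly 𝕜 m q) hq1 z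
        rwa [hS] at h
      set Φ : ContinuousMultilinearMap 𝕜 (fun _ : Fin m => X) 𝕜 :=
        ∑ σ : Equiv.Perm (Fin m), S.domDomCongr σ with hΦdef
      have hΦapp : ∀ y : Fin m → X, Φ y = ∑ σ : Equiv.Perm (Fin m), S.domDomCongr σ y := by
        intro y; rw [hΦdef, ContinuousMultilinearMap.sum_apply]
      set c𝕜 : 𝕜 := ((m^m : ℕ) : 𝕜) with hcdef
      have hc0 : c𝕜 ≠ 0 := Nat.cast_ne_zero.mpr hmmnat.ne'
      set φ₀ : ContinuousMultilinearMap 𝕜 (fun _ : Fin m => X) 𝕜 := c𝕜⁻¹ • Φ with hφ₀def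
      have hΦle : ∀ y : Fin m → X, ‖Φ y‖ ≤ (m:ℝ)^m * ∏ k, ‖y k‖ := by
        intro y
        rw [hΦapp y]
        exact sym_norm_le S hdiag y
      have hcnorm : ‖c𝕜‖ = (m:ℝ)^m := by
        rw [hcdef, RCLike.norm_natCast]; push_cast; ring
      have hφ₀norm : ‖φ₀‖ ≤ 1 := by
        apply ContinuousMultilinearMap.opNorm_le_bound zero_le_one
        intro y
        rw [hφ₀def, ContinuousMultilinearMap.smul_apply, norm_smul, norm_inv, hcnorm]
        calc ((m:ℝ)^m)⁻¹ * ‖Φ y‖ ≤ ((m:ℝ)^m)⁻¹ * ((m:ℝ)^m * ∏ k, ‖y k‖) :=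
              mul_le_mul_of_nonneg_left (hΦle y) (by positivity)
          _ = 1 * ∏ k, ‖y k‖ := by field_simp
      have hΦeq : Φ = c𝕜 • φ₀ := (smul_inv_smul₀ hc0 Φ).symm
      set d : 𝕜 := c𝕜 / (m.factorial : 𝕜) with hddef
      have hdnorm : ‖d‖ = (m:ℝ)^m / m.factorial := by
        rw [hddef, norm_div, hcnorm, RCLike.norm_natCast]
      have hval : ∀ j, ∑ i', lam' j i' • q (x' j i') = d * ∑ i, lam j i • φ₀ (x j i) := by
        intro j
        calc ∑ i', lam' j i' • q (x' j i')
            = ∑ z : Fin m₂ × (Fin m → Bool), (r * lam j z.1 * ∏ k, sgn 𝕜 (z.2 k)) •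
                q (∑ k, sgn 𝕜 (z.2 k) • x j z.1 k) :=
              Equiv.sum_comp e.symm (fun z : Fin m₂ × (Fin m → Bool) =>
                (r * lam j z.1 * ∏ k, sgn 𝕜 (z.2 k)) •
                  q (∑ k, sgn 𝕜 (z.2 k) • x j z.1 k))
          _ = ∑ i : Fin m₂, ∑ ε : Fin m → Bool, (r * lam j i * ∏ k, sgn 𝕜 (ε k)) •
                q (∑ k, sgn 𝕜 (ε k) • x j i k) := Fintype.sum_prod_type _
          _ = ∑ i, d * (lam j i • φ₀ (x j i)) := by
              apply Finset.sum_congr rfl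
              intro i _
              have hqS : ∀ ε : Fin m → Bool,
                  q (∑ k, sgn 𝕜 (ε k) • x j i k)
                    = S (fun _ => ∑ k, sgn 𝕜 (ε k) • x j i k) := fun ε => hS _
              calc ∑ ε : Fin m → Bool, (r * lam j i * ∏ k, sgn 𝕜 (ε k)) •
                    q (∑ k, sgn 𝕜 (ε k) • x j i k)
                  = (r * lam j i) • ∑ ε : Fin m → Bool, (∏ k, sgn 𝕜 (ε k)) •
                      S (fun _ => ∑ k, sgn 𝕜 (ε k) • x j i k) := by
                    rw [Finset.smul_sum]
                    exact Finset.sum_congr rfl fun ε _ => by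
                      rw [hqS ε, smul_smul, mul_assoc]
                _ = (r * lam j i) • ((2:𝕜)^m • ∑ σ : Equiv.Perm (Fin m), S (x j i ∘ σ)) := by
                    rw [polar_eq S (x j i)]
                _ = (r * lam j i) • ((2:𝕜)^m • Φ (x j i)) := by
                    rw [hΦapp]
                    rfl
                _ = d * (lam j i • φ₀ (x j i)) := by
                    rw [hΦeq]
                    simp only [ContinuousMultilinearMap.smul_apply, smul_eq_mul]
                    have hrd : r * ((2:𝕜)^m * c𝕜) = d := by
                      rw [hddef, hrdef]
                      field_simp
                    rw [← hrd]
                    ring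
          _ = d * ∑ i, lam j i • φ₀ (x j i) := (Finset.mul_sum _ _ _).symm
      calc (∑ j, ‖∑ i', lam' j i' • q (x' j i')‖ ^ p) ^ (1/p)
          = (∑ j, (‖d‖ * ‖∑ i, lam j i • φ₀ (x j i)‖) ^ p) ^ (1/p) := by
            congr 1
            exact Finset.sum_congr rfl fun j _ => by rw [hval j, norm_mul]
        _ = ‖d‖ * (∑ j, ‖∑ i, lam j i • φ₀ (x j i)‖ ^ p) ^ (1/p) :=
            lp_smul hp (norm_nonneg d) _ (fun j => norm_nonneg _)
        _ ≤ ‖d‖ * ⨆ φ : {φ : ContinuousMultilinearMap 𝕜 (fun _ : Fin m => X) 𝕜 // ‖φ‖ ≤ 1},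
              (∑ j, ‖∑ i, lam j i • φ.1 (x j i)‖ ^ p) ^ (1/p) := by
            apply mul_le_mul_of_nonneg_left _ (norm_nonneg d)
            exact le_ciSup (phi_bdd m m₁ m₂ hp x lam) ⟨φ₀, hφ₀norm⟩
        _ = ((m:ℝ)^m / m.factorial) * _ := by rw [hdnorm]
    calc (∑ j, ‖∑ i, lam j i • T (x j i)‖ ^ p) ^ (1/p)
        = (∑ j, ‖∑ i', lam' j i' • T (fun _ => x' j i')‖ ^ p) ^ (1/p) := by
          congr 1
          exact Finset.sum_congr rfl fun j _ => by rw [hkey j]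
      _ ≤ C * ⨆ q : {q : X → 𝕜 // IsHomogPoly 𝕜 m q ∧ polyNorm q ≤ 1},
            (∑ j, ‖∑ i', lam' j i' • q.1 (x' j i')‖ ^ p) ^ (1/p) := happ
      _ ≤ C * (((m:ℝ)^m / m.factorial) *
            ⨆ φ : {φ : ContinuousMultilinearMap 𝕜 (fun _ : Fin m => X) 𝕜 // ‖φ‖ ≤ 1},
              (∑ j, ‖∑ i, lam j i • φ.1 (x j i)‖ ^ p) ^ (1/p)) :=
          mul_le_mul_of_nonneg_left hsup hC0
      _ = _ := by ring
  · -- easy direction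
    rintro ⟨C, hC0, hC⟩
    refine ⟨⟨T, fun x => rfl⟩, C, hC0, ?_⟩
    intro m₁ m₂ x lam
    refine (hC m₁ m₂ (fun j i => fun _ => x j i) lam).trans ?_
    apply mul_le_mul_of_nonneg_left _ hC0
    apply ciSup_le
    intro φ
    have hq : IsHomogPoly 𝕜 m (fun y : X => φ.1 fun _ => y) := ⟨φ.1, fun y => rfl⟩
    have hqn : polyNorm (fun y : X => φ.1 fun _ => y) ≤ 1 := by
      apply ciSup_le
      rintro ⟨y, hy⟩
      refine (φ.1.le_opNorm _).trans ?_
      calc ‖φ.1‖ * ∏ _k : Fin m, ‖y‖ ≤ 1 * 1 :=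
            mul_le_mul φ.2 (Finset.prod_le_one (fun _ _ => norm_nonneg _) fun _ _ => hy)
              (by positivity) zero_le_one
        _ = 1 := mul_one _
    exact le_ciSup (q_bdd m m₁ m₂ hp x lam)
      (⟨fun y : X => φ.1 fun _ => y, hq, hqn⟩ :
        {q : X → 𝕜 // IsHomogPoly 𝕜 m q ∧ polyNorm q ≤ 1})
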